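/- With the above bracket on W = ℝ⁶: (i) the bracket satisfies the graded Jacobi identity [x,[y,z]] = [[x,y],z] + (−1)^{|x||y|}[y,[x,z]] for all parity-homogeneous x, y, z ∈ W, so W is a Lie superalgebra of superdimension (2|4); (ii) the subspaces span{T₁,T₂,T₃} and span{T̃¹,T̃²,T̃³} are closed under the bracket, realizing the Lie superalgebras (A₁,₁+2A)⁰ and C³ respectively; (iii) the bilinear form ⟨·,·⟩ on W determined by ⟨T₁,T̃¹⟩ = ⟨T̃¹,T₁⟩ = 1, ⟨T₂,T̃²⟩ = ⟨T₃,T̃³⟩ = −1, ⟨T̃²,T₂⟩ = ⟨T̃³,T₃⟩ = 1, and all other values on basis vectors zero, is non-degenerate and invariant in the sense that ⟨[x,y],z⟩ = ⟨x,[y,z]⟩ for all x, y, z ∈ W, and both subspaces span{T₁,T₂,T₃} and span{T̃¹,T̃²,T̃³} are isotropic for ⟨·,·⟩. Hence W realizes the Drinfeld superdouble ((A₁,₁+2A)⁰, C³). -/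

import Mathlib

noncomputable section

/-- The underlying vector space `W = ℝ⁶` of the Drinfeld superdouble, with basis
`T₁ = S 0, T₂ = S 1, T₃ = S 2, T̃¹ = S 3, T̃² = S 4, T̃³ = S 5`; here `S 0` and `S 3` are even
and `S 1, S 2, S 4, S 5` are odd. -/
abbrev W6 : Type := Fin 6 → ℝ

/-- The basis vectors of `W`. -/
def S (i : Fin 6) : W6 := Pi.single i 1

/-- The even subspace `span{T₁, T̃¹}`. -/
def evenW : Submodule ℝ W6 := Submodule.span ℝ {S 0, S 3}

/-- The odd subspace `span{T₂, T₃, T̃², T̃³}`. -/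
def oddW : Submodule ℝ W6 := Submodule.span ℝ {S 1, S 2, S 4, S 5}

/-- The subspace `span{T₁,T₂,T₃}` (the Lie superalgebra `(A₁,₁+2A)⁰`). -/
def spanG : Submodule ℝ W6 := Submodule.span ℝ {S 0, S 1, S 2}

/-- The subspace `span{T̃¹,T̃²,T̃³}` (the dual Lie superalgebra `C³`). -/
def spanGt : Submodule ℝ W6 := Submodule.span ℝ {S 3, S 4, S 5}

/-- The bilinear bracket of the Drinfeld superdouble `((A₁,₁+2A)⁰, C³)`, determined on basis
vectors by `[T₃,T₃] = (1/β)T₁`, `[T̃¹,T̃²] = (1/(2β))T̃³`, `[T̃²,T̃¹] = −(1/(2β))T̃³`,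
`[T₃,T̃¹] = (1/(2β))T₂ − (1/β)T̃³`, `[T̃¹,T₃] = −(1/(2β))T₂ + (1/β)T̃³`,
`[T₃,T̃²] = [T̃²,T₃] = (1/(2β))T₁`, all other brackets of basis vectors zero. -/
def brW (β : ℝ) (x y : W6) : W6 :=
  ![(1/β) * (x 2 * y 2) + (1/(2*β)) * (x 2 * y 4 + x 4 * y 2),
    (1/(2*β)) * (x 2 * y 3 - x 3 * y 2),
    0, 0, 0,
    (1/(2*β)) * (x 3 * y 4 - x 4 * y 3) - (1/β) * (x 2 * y 3 - x 3 * y 2)]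

/-- The invariant bilinear form `⟨·,·⟩` on `W`, determined by `⟨T₁,T̃¹⟩ = ⟨T̃¹,T₁⟩ = 1`,
`⟨T₂,T̃²⟩ = ⟨T₃,T̃³⟩ = −1`, `⟨T̃²,T₂⟩ = ⟨T̃³,T₃⟩ = 1`, all other values on basis vectors zero. -/
def pairW (x y : W6) : ℝ :=
  x 0 * y 3 + x 3 * y 0 - x 1 * y 4 + x 4 * y 1 - x 2 * y 5 + x 5 * y 2

/-- **The Drinfeld superdouble `((A₁,₁+2A)⁰, C³)`.** For `β ≠ 0`:
(i) the bracket `brW β` satisfies the graded Jacobi identity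
`[x,[y,z]] = [[x,y],z] + (−1)^{|x||y|}[y,[x,z]]` for all parity-homogeneous `x, y, z ∈ W`,
so `W` is a Lie superalgebra of superdimension `(2|4)`;
(ii) `span{T₁,T₂,T₃}` and `span{T̃¹,T̃²,T̃³}` are closed under the bracket, realizing
`(A₁,₁+2A)⁰` (with `[T₃,T₃] = (1/β)T₁`) and `C³` (with `[T̃¹,T̃²] = (1/(2β))T̃³`) respectively;
(iii) the bilinear form `⟨·,·⟩` is non-degenerate, invariant (`⟨[x,y],z⟩ = ⟨x,[y,z]⟩`), and
both `span{T₁,T₂,T₃}` and `span{T̃¹,T̃²,T̃³}` are isotropic for it. -/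
-- auxiliary lemmas
lemma vec6_val_five {α : Type*} (x0 x1 x2 x3 x4 x5 : α) :
    ![x0, x1, x2, x3, x4, x5] (5 : Fin 6) = x5 := rfl

lemma vec6_val_two {α : Type*} (x0 x1 x2 x3 x4 x5 : α) :
    ![x0, x1, x2, x3, x4, x5] (2 : Fin 6) = x2 := rfl

lemma vec6_val_three {α : Type*} (x0 x1 x2 x3 x4 x5 : α) :
    ![x0, x1, x2, x3, x4, x5] (3 : Fin 6) = x3 := rfl

lemma vec6_val_four {α : Type*} (x0 x1 x2 x3 x4 x5 : α) :
    ![x0, x1, x2, x3, x4, x5] (4 : Fin 6) = x4 := rfl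

lemma brW_apply_right_zero (β : ℝ) (x y : W6) (h2 : y 2 = 0) (h3 : y 3 = 0) (h4 : y 4 = 0) :
    brW β x y = 0 := by
  funext i; fin_cases i <;> simp [brW, vec6_val_five, h2, h3, h4]

lemma brW_coords (β : ℝ) (x y : W6) :
    (brW β x y) 2 = 0 ∧ (brW β x y) 3 = 0 ∧ (brW β x y) 4 = 0 := by
  refine ⟨?_, ?_, ?_⟩ <;> simp [brW]

lemma brW_nested_right (β : ℝ) (x y z : W6) : brW β x (brW β y z) = 0 :=
  brW_apply_right_zero β x _ (brW_coords β y z).1 (brW_coords β y z).2.1 (brW_coords β y z).2.2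

lemma brW_apply_left_zero (β : ℝ) (x y : W6) (h2 : x 2 = 0) (h3 : x 3 = 0) (h4 : x 4 = 0) :
    brW β x y = 0 := by
  funext i; fin_cases i <;> simp [brW, vec6_val_five, h2, h3, h4]

lemma mem_spanG_coords {x : W6} (hx : x ∈ spanG) : x 3 = 0 ∧ x 4 = 0 ∧ x 5 = 0 := by
  induction hx using Submodule.span_induction with
  | mem v hv =>
    rcases hv with h | h | h <;> subst h <;>
      refine ⟨?_, ?_, ?_⟩ <;> simp [S, Pi.single_eq_of_ne, show (3:Fin 6) ≠ 0 by decide]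
  | zero => simp
  | add a b _ _ ha hb => exact ⟨by simp [ha.1, hb.1], by simp [ha.2.1, hb.2.1], by simp [ha.2.2, hb.2.2]⟩
  | smul c a _ ha => exact ⟨by simp [ha.1], by simp [ha.2.1], by simp [ha.2.2]⟩

lemma mem_spanGt_coords {x : W6} (hx : x ∈ spanGt) : x 0 = 0 ∧ x 1 = 0 ∧ x 2 = 0 := by
  induction hx using Submodule.span_induction with
  | mem v hv =>
    rcases hv with h | h | h <;> subst h <;>
      refine ⟨?_, ?_, ?_⟩ <;> simp [S, Pi.single_eq_of_ne]
  | zero => simp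
  | add a b _ _ ha hb => exact ⟨by simp [ha.1, hb.1], by simp [ha.2.1, hb.2.1], by simp [ha.2.2, hb.2.2]⟩
  | smul c a _ ha => exact ⟨by simp [ha.1], by simp [ha.2.1], by simp [ha.2.2]⟩

theorem drinfeld_superdouble_A112A0_C3 (β : ℝ) (hβ : β ≠ 0) :
    -- (i) graded Jacobi identity for parity-homogeneous elements
    (∀ (px py pz : Bool) (x y z : W6),
        x ∈ (if px then oddW else evenW) →
        y ∈ (if py then oddW else evenW) →
        z ∈ (if pz then oddW else evenW) →
        brW β x (brW β y z) =
          brW β (brW β x y) z + (if px && py then (-1 : ℝ) else 1) • brW β y (brW β x z)) ∧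
    -- (ii) the two halves are sub-superalgebras, realizing (A₁,₁+2A)⁰ and C³
    (∀ x ∈ spanG, ∀ y ∈ spanG, brW β x y ∈ spanG) ∧
    (∀ x ∈ spanGt, ∀ y ∈ spanGt, brW β x y ∈ spanGt) ∧
    brW β (S 2) (S 2) = (1/β) • S 0 ∧
    brW β (S 3) (S 4) = (1/(2*β)) • S 5 ∧
    -- (iii) the bilinear form is non-degenerate, invariant, and both halves are isotropic
    (∀ x : W6, (∀ y : W6, pairW x y = 0) → x = 0) ∧
    (∀ x y z : W6, pairW (brW β x y) z = pairW x (brW β y z)) ∧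
    (∀ x ∈ spanG, ∀ y ∈ spanG, pairW x y = 0) ∧
    (∀ x ∈ spanGt, ∀ y ∈ spanGt, pairW x y = 0) := by

  have hnest : ∀ x y z : W6, brW β x (brW β y z) = 0 := brW_nested_right β
  have hnestL : ∀ x y z : W6, brW β (brW β x y) z = 0 := fun x y z =>
    brW_apply_left_zero β _ _ (brW_coords β x y).1 (brW_coords β x y).2.1 (brW_coords β x y).2.2
  refine ⟨?_, ?_, ?_, ?_, ?_, ?_, ?_, ?_, ?_⟩
  · intro px py pz x y z _ _ _
    rw [hnest, hnestL, hnest, smul_zero, add_zero]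
  · intro x hx y hy
    obtain ⟨hx3, hx4, hx5⟩ := mem_spanG_coords hx
    obtain ⟨hy3, hy4, hy5⟩ := mem_spanG_coords hy
    have : brW β x y = ((1/β) * (x 2 * y 2)) • S 0 := by
      funext i; fin_cases i <;> simp [brW, S, vec6_val_five, hx3, hx4, hy3, hy4, Pi.single_apply]
    rw [this]
    exact Submodule.smul_mem _ _ (Submodule.subset_span (by simp))
  · intro x hx y hy
    obtain ⟨hx0, hx1, hx2⟩ := mem_spanGt_coords hx
    obtain ⟨hy0, hy1, hy2⟩ := mem_spanGt_coords hy
    have : brW β x y = ((1/(2*β)) * (x 3 * y 4 - x 4 * y 3)) • S 5 := by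
      funext i; fin_cases i <;> simp [brW, S, vec6_val_five, hx2, hy2, Pi.single_apply]
    rw [this]
    exact Submodule.smul_mem _ _ (Submodule.subset_span (by simp))
  · funext i; fin_cases i <;> simp [brW, S, vec6_val_five, Pi.single_apply]
  · funext i; fin_cases i <;> simp [brW, S, vec6_val_five, Pi.single_apply]
  · intro x h
    funext i
    fin_cases i
    · have := h (S 3); simp [pairW, S, Pi.single_apply] at this; simpa using this
    · have := h (S 4); simp [pairW, S, Pi.single_apply] at this; simpa using this
    · have := h (S 5); simp [pairW, S, Pi.single_apply] at this; simpa using this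
    · have := h (S 0); simp [pairW, S, Pi.single_apply] at this; simpa using this
    · have := h (S 1); simp [pairW, S, Pi.single_apply] at this; simpa using this
    · have := h (S 2); simp [pairW, S, Pi.single_apply] at this; simpa using this
  · intro x y z
    simp only [pairW, brW]
    norm_num [Matrix.cons_val_zero, Matrix.cons_val_one, vec6_val_five, vec6_val_two, vec6_val_three, vec6_val_four]
    ring
  · intro x hx y hy
    obtain ⟨hx3, hx4, hx5⟩ := mem_spanG_coords hx
    obtain ⟨hy3, hy4, hy5⟩ := mem_spanG_coords hy
    simp [pairW, hx3, hx4, hx5, hy3, hy4, hy5]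
  · intro x hx y hy
    obtain ⟨hx0, hx1, hx2⟩ := mem_spanGt_coords hx
    obtain ⟨hy0, hy1, hy2⟩ := mem_spanGt_coords hy
    simp [pairW, hx0, hx1, hx2, hy0, hy1, hy2]
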